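/- Let k ≥ 6 be an integer and let F be a simple graph on 2k vertices. Suppose S ⊆ V(F) is a set of vertices such that every connected component of F − S is factor-critical, and such that |S| + Σ_{i=1}^{q} (d_i − 1)/2 = k − 1, where d_1 ≥ d_2 ≥ … ≥ d_q are the orders of the connected components of F − S. If e(F) ≥ C(2k−2,2) + 1, then |S| ≤ 1 and at most one connected component of F − S has more than one vertex (i.e., d_2 = 1). -/

import Mathlib

/-- A graph `D` is factor-critical if for every vertex `v`, the graph `D - v` has a perfect
matching, i.e. `D` has a matching covering exactly the complement of `{v}`. -/
def FactorCritical {W : Type*} (D : SimpleGraph W) : Prop :=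
  ∀ v : W, ∃ M : D.Subgraph, M.IsMatching ∧ M.verts = {v}ᶜ

lemma sum_supp_ncard {W : Type*} [Fintype W] (G : SimpleGraph W)
    [Fintype G.ConnectedComponent] :
    ∑ c : G.ConnectedComponent, c.supp.ncard = Fintype.card W := by
  classical
  have key : (Finset.univ : Finset W).card =
      ∑ c : G.ConnectedComponent, (Finset.univ.filter
        fun w => G.connectedComponentMk w = c).card :=
    Finset.card_eq_sum_card_fiberwise (fun w _ => Finset.mem_univ _)
  rw [Fintype.card, key]
  refine Finset.sum_congr ?_ fun c _ => ?_
  · congr!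
  rw [Set.ncard_eq_toFinset_card']
  congr 1
  ext w
  simp [SimpleGraph.ConnectedComponent.mem_supp_iff]

lemma filter_card_supp {W : Type*} [Fintype W] (G : SimpleGraph W)
    [DecidableEq G.ConnectedComponent] (c : G.ConnectedComponent) :
    (Finset.univ.filter fun w => G.connectedComponentMk w = c).card
      = c.supp.ncard := by
  classical
  rw [Set.ncard_eq_toFinset_card']
  congr 1
  ext w
  simp [SimpleGraph.ConnectedComponent.mem_supp_iff]

lemma odd_ncard_of_factorCritical {W : Type*} [Fintype W] {G : SimpleGraph W}
    (c : G.ConnectedComponent) (h : FactorCritical (G.induce c.supp)) :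
    Odd c.supp.ncard := by
  classical
  obtain ⟨v, hv⟩ := c.exists_rep
  have hvmem : v ∈ c.supp := by
    rw [SimpleGraph.ConnectedComponent.mem_supp_iff]
    exact hv
  obtain ⟨M, hM, hverts⟩ := h ⟨v, hvmem⟩
  haveI : Fintype M.verts := Fintype.ofFinite _
  have heven : Even M.verts.ncard := by
    rw [Set.ncard_eq_toFinset_card']
    exact hM.even_card
  rw [hverts] at heven
  have hc : Fintype.card c.supp = c.supp.ncard := by
    rw [Set.ncard_eq_toFinset_card', Set.toFinset_card]
  have hsingle : ({(⟨v, hvmem⟩ : c.supp)} : Set c.supp).ncard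
      + ({(⟨v, hvmem⟩ : c.supp)}ᶜ : Set c.supp).ncard = Nat.card c.supp := by
    rw [Set.ncard_add_ncard_compl]
  rw [Set.ncard_singleton, Nat.card_eq_fintype_card, hc] at hsingle
  have hpos : 0 < c.supp.ncard := by
    rw [← hc]
    exact Fintype.card_pos_iff.mpr ⟨⟨v, hvmem⟩⟩
  obtain ⟨r, hr⟩ := heven
  exact ⟨r, by omega⟩

lemma choose_two_step (n : ℕ) : (n+2).choose 2 = n.choose 2 + (2*n+1) := by
  rw [show n+2 = (n+1)+1 from rfl, Nat.choose_succ_succ (n+1) 1,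
    Nat.choose_succ_succ n 1, Nat.choose_one_right, Nat.choose_one_right]
  ring

lemma aux_prod (a b m : ℕ) (ha : 3 ≤ a) (hb : 3 ≤ b) (h : a + b = m) :
    3*m ≤ a*b + 9 := by
  obtain ⟨a', rfl⟩ := Nat.exists_eq_add_of_le ha
  obtain ⟨b', rfl⟩ := Nat.exists_eq_add_of_le hb
  subst h
  nlinarith

lemma aux_quad (s T k : ℤ) (hs : 2 ≤ s) (hT : 0 ≤ T) (hk : 6 ≤ k)
    (h : s + T = k - 1) : 8*k - 6 ≤ (s+1)*(4*T+s+2) := by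
  rcases le_or_gt s 5 with h5 | h5
  · nlinarith [(by linarith : 5 - s ≤ T)]
  · nlinarith

/-- Claims 3.1 and 3.2: let `k ≥ 6` and let `F` be a graph on `2k` vertices. Suppose `S` is a
set of vertices such that every connected component of `F - S` is factor-critical and
`|S| + Σᵢ (dᵢ - 1)/2 = k - 1`, where the `dᵢ` are the orders of the components of `F - S`.
If `e(F) ≥ C(2k-2,2) + 1`, then `|S| ≤ 1` and at most one component of `F - S` has more than
one vertex (i.e. `d₂ = 1` when the orders are listed as `d₁ ≥ d₂ ≥ ⋯ ≥ d_q`). -/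
theorem claim_S_le_one_and_d2_eq_one
    {V : Type*} [Fintype V] (k : ℕ) (hk : 6 ≤ k) (hV : Fintype.card V = 2 * k)
    (F : SimpleGraph V) (S : Set V)
    (hfc : ∀ K : (F.induce Sᶜ).ConnectedComponent,
      FactorCritical ((F.induce Sᶜ).induce K.supp))
    (hsum : S.ncard +
      ∑ᶠ K : (F.induce Sᶜ).ConnectedComponent, (K.supp.ncard - 1) / 2 = k - 1)
    (he : (2 * k - 2).choose 2 + 1 ≤ F.edgeSet.ncard) :
    S.ncard ≤ 1 ∧
    {K : (F.induce Sᶜ).ConnectedComponent | 1 < K.supp.ncard}.Subsingleton := by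
  classical
  set G := F.induce Sᶜ with hGdef
  haveI : Fintype G.ConnectedComponent := Fintype.ofFinite _
  set s := S.ncard with hsdef
  set m := Fintype.card ↥Sᶜ with hmdef
  set d : G.ConnectedComponent → ℕ := fun c => c.supp.ncard with hddef
  set q := Fintype.card G.ConnectedComponent with hqdef
  -- basic cardinalities
  have hsm : s + m = 2 * k := by
    have h1 : S.ncard + Sᶜ.ncard = Nat.card V := Set.ncard_add_ncard_compl S
    rw [Nat.card_eq_fintype_card, hV] at h1
    rw [hsdef, hmdef, ← h1]
    congr 1
    rw [Set.ncard_eq_toFinset_card', Set.toFinset_card]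
  have hsumd : ∑ c, d c = m := sum_supp_ncard G
  have hodd : ∀ c, Odd (d c) := fun c => odd_ncard_of_factorCritical c (hfc c)
  have hpos : ∀ c, 1 ≤ d c := fun c => (hodd c).pos
  have hdm : ∀ c, d c ≤ m := by
    intro c
    rw [← hsumd]
    exact Finset.single_le_sum (fun c _ => Nat.zero_le _) (Finset.mem_univ c)
  have hsum' : s + ∑ c, (d c - 1) / 2 = k - 1 := by
    rw [← finsum_eq_sum_of_fintype]; exact hsum
  set T := ∑ c, (d c - 1) / 2 with hTdef
  have hdodd : ∀ c, d c = 2 * ((d c - 1) / 2) + 1 := by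
    intro c
    obtain ⟨r, hr⟩ := hodd c
    omega
  have hdT : ∑ c, d c = 2 * T + q := by
    calc ∑ c, d c = ∑ c, (2 * ((d c - 1) / 2) + 1) :=
          Finset.sum_congr rfl fun c _ => hdodd c
      _ = 2 * T + q := by
          rw [Finset.sum_add_distrib, Finset.sum_const, ← Finset.mul_sum,
            Finset.card_univ, smul_eq_mul, mul_one]
  -- the auxiliary graph H of "cross pairs"
  set H : SimpleGraph V :=
    { Adj := fun u v => ∃ (hu : u ∈ Sᶜ) (hv : v ∈ Sᶜ),
        G.connectedComponentMk ⟨u, hu⟩ ≠ G.connectedComponentMk ⟨v, hv⟩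
      symm := ⟨fun u v ⟨hu, hv, hne⟩ => ⟨hv, hu, hne.symm⟩⟩
      loopless := ⟨fun u ⟨hu, hv, hne⟩ => hne rfl⟩ } with hHdef
  haveI : DecidableRel H.Adj := fun _ _ => Classical.dec _
  haveI : DecidableRel F.Adj := fun _ _ => Classical.dec _
  have hdisj : Disjoint F H := by
    rw [disjoint_iff_inf_le]
    rintro u v ⟨hF, hu, hv, hne⟩
    exact hne (SimpleGraph.ConnectedComponent.sound
      (SimpleGraph.Adj.reachable (by exact hF : G.Adj ⟨u, hu⟩ ⟨v, hv⟩)))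
  -- degree computations for H
  have degS : ∀ v : V, v ∉ Sᶜ → H.degree v = 0 := by
    intro v hv
    have h0 : H.neighborFinset v = ∅ :=
      Finset.eq_empty_of_forall_notMem fun u hu => by
        rw [SimpleGraph.mem_neighborFinset] at hu
        obtain ⟨hv', -, -⟩ := hu
        exact hv hv'
    have := Finset.card_eq_zero.mpr h0
    rwa [SimpleGraph.card_neighborFinset_eq_degree] at this
  have degC : ∀ w : ↥Sᶜ, H.degree ↑w = m - d (G.connectedComponentMk w) := by
    intro w
    have himg : H.neighborFinset ↑w =
        Finset.image (Subtype.val : ↥Sᶜ → V)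
          (Finset.univ.filter fun w' : ↥Sᶜ =>
            ¬ G.connectedComponentMk w' = G.connectedComponentMk w) := by
      ext u
      simp only [SimpleGraph.mem_neighborFinset, Finset.mem_image, Finset.mem_filter,
        Finset.mem_univ, true_and]
      constructor
      · rintro ⟨h1, h2, hne⟩
        exact ⟨⟨u, h2⟩, fun h => hne h.symm, rfl⟩
      · rintro ⟨w', hw', rfl⟩
        exact ⟨w.2, w'.2, fun h => hw' h.symm⟩
    have hdeg1 : H.degree ↑w = (Finset.univ.filter fun w' : ↥Sᶜ =>
        ¬ G.connectedComponentMk w' = G.connectedComponentMk w).card := by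
      rw [← SimpleGraph.card_neighborFinset_eq_degree, himg,
        Finset.card_image_of_injective _ Subtype.val_injective]
    have hsplit := Finset.card_filter_add_card_filter_not
      (s := (Finset.univ : Finset ↥Sᶜ))
      (p := fun w' : ↥Sᶜ => G.connectedComponentMk w' = G.connectedComponentMk w)
    have hfib : (Finset.univ.filter fun w' : ↥Sᶜ =>
        G.connectedComponentMk w' = G.connectedComponentMk w).card
        = d (G.connectedComponentMk w) := filter_card_supp G _
    rw [Finset.card_univ] at hsplit
    omega
  -- total degree count
  have hdeg : ∑ v, H.degree v = ∑ c, d c * (m - d c) := by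
    calc ∑ v, H.degree v
        = ∑ v ∈ Sᶜ.toFinset, H.degree v := by
          refine (Finset.sum_subset (Finset.subset_univ _) ?_).symm
          intro v _ hv
          exact degS v (by simpa [Set.mem_toFinset] using hv)
      _ = ∑ w : ↥Sᶜ, H.degree ↑w := by
          refine Finset.sum_subtype _ (fun x => ?_) _
          simp [Set.mem_toFinset]
      _ = ∑ w : ↥Sᶜ, (m - d (G.connectedComponentMk w)) :=
          Finset.sum_congr rfl fun w _ => degC w
      _ = ∑ c, ∑ w ∈ Finset.univ.filter
            (fun w : ↥Sᶜ => G.connectedComponentMk w = c), (m - d c) :=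
          (Finset.sum_fiberwise' Finset.univ
            (fun w : ↥Sᶜ => G.connectedComponentMk w) (fun c => m - d c)).symm
      _ = ∑ c, d c * (m - d c) := by
          refine Finset.sum_congr rfl fun c _ => ?_
          rw [Finset.sum_const, filter_card_supp G c, smul_eq_mul]
  -- edge counting
  have hEdges : F.edgeFinset.card + H.edgeFinset.card ≤ (2 * k).choose 2 := by
    rw [← Finset.card_union_of_disjoint (SimpleGraph.disjoint_edgeFinset.mpr hdisj),
      ← SimpleGraph.edgeFinset_sup, ← hV]
    exact SimpleGraph.card_edgeFinset_le_card_choose_two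
  have hchoose : (2 * k).choose 2 = (2 * k - 2).choose 2 + (4 * k - 3) := by
    have h2 : 2 * k = (2 * k - 2) + 2 := by omega
    conv_lhs => rw [h2]
    rw [choose_two_step]
    omega
  have heF : F.edgeSet.ncard = F.edgeFinset.card := by
    rw [Set.ncard_eq_toFinset_card']
    congr 1
  have hmain : ¬ (8 * k - 6 ≤ ∑ c, d c * (m - d c)) := by
    intro hbig
    rw [← hdeg, SimpleGraph.sum_degrees_eq_twice_card_edges] at hbig
    omega
  by_cases hs : 2 ≤ s
  · -- Case 1 : |S| ≥ 2, contradiction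
    exfalso
    apply hmain
    -- work over ℤ
    have hcast : ((∑ c, d c * (m - d c) : ℕ) : ℤ)
        = (m : ℤ)^2 - ∑ c, (d c : ℤ)^2 := by
      rw [Nat.cast_sum]
      have : ∀ c ∈ Finset.univ, ((d c * (m - d c) : ℕ) : ℤ)
          = (m : ℤ) * (d c : ℤ) - (d c : ℤ)^2 := by
        intro c _
        rw [Nat.cast_mul, Nat.cast_sub (hdm c)]
        ring
      rw [Finset.sum_congr rfl this, Finset.sum_sub_distrib, ← Finset.mul_sum,
        ← Nat.cast_sum, hsumd]
      ring
    have hqsum : q = s + 2 := by omega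
    have hsq : ∀ c, ((d c : ℤ))^2 = 4 * ((((d c - 1) / 2 : ℕ)) : ℤ)^2
        + 4 * ((((d c - 1) / 2 : ℕ)) : ℤ) + 1 := by
      intro c
      have := hdodd c
      have : (d c : ℤ) = 2 * ((((d c - 1) / 2 : ℕ)) : ℤ) + 1 := by
        exact_mod_cast congrArg (Nat.cast : ℕ → ℤ) this
      rw [this]; ring
    have hTz : ∑ c, ((((d c - 1) / 2 : ℕ)) : ℤ) = (T : ℤ) := by
      rw [hTdef, Nat.cast_sum]
    have hsumsq : ∑ c, ((d c : ℤ))^2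
        = 4 * (∑ c, ((((d c - 1) / 2 : ℕ)) : ℤ)^2) + 4 * (T : ℤ) + q := by
      rw [Finset.sum_congr rfl (fun c _ => hsq c), Finset.sum_add_distrib,
        Finset.sum_add_distrib, ← Finset.mul_sum, ← Finset.mul_sum,
        Finset.sum_const, Finset.card_univ, nsmul_eq_mul, mul_one, hTz]
    have htsq : ∑ c, ((((d c - 1) / 2 : ℕ)) : ℤ)^2
        ≤ (∑ c, ((((d c - 1) / 2 : ℕ)) : ℤ))^2 :=
      Finset.sum_sq_le_sq_sum_of_nonneg (fun c _ => by positivity)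
    rw [hTz] at htsq
    have hmz : (m : ℤ) = 2 * (T : ℤ) + (q : ℤ) := by exact_mod_cast hsumd ▸ hdT
    have hkz : (s : ℤ) + (T : ℤ) = (k : ℤ) - 1 := by
      have : (s : ℤ) + (T : ℤ) = ((s + T : ℕ) : ℤ) := by push_cast; ring
      rw [this, hsum']
      have : ((k - 1 : ℕ) : ℤ) = (k : ℤ) - 1 := by
        rw [Nat.cast_sub (by omega)]; norm_num
      rw [this]
    have hqz : (q : ℤ) = (s : ℤ) + 2 := by exact_mod_cast hqsum
    have hkey : (8 * k - 6 : ℤ) ≤ ((∑ c, d c * (m - d c) : ℕ) : ℤ) := by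
      rw [hcast, hsumsq, hmz, hqz]
      have hszz : (2 : ℤ) ≤ (s : ℤ) := by exact_mod_cast hs
      have hTnn : (0 : ℤ) ≤ (T : ℤ) := by positivity
      have hkzz : (6 : ℤ) ≤ (k : ℤ) := by exact_mod_cast hk
      have hexp : (2*(T:ℤ)+((s:ℤ)+2))^2
          - (4 * (∑ c, ((((d c - 1) / 2 : ℕ)) : ℤ)^2) + 4*(T:ℤ) + ((s:ℤ)+2))
          = ((s:ℤ)+1)*(4*(T:ℤ)+(s:ℤ)+2)
            + 4*((T:ℤ)^2 - (∑ c, ((((d c - 1) / 2 : ℕ)) : ℤ)^2)) := by ring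
      linarith [aux_quad (s : ℤ) (T : ℤ) (k : ℤ) hszz hTnn hkzz hkz, hexp, htsq]
    have : ((8 * k - 6 : ℕ) : ℤ) ≤ ((∑ c, d c * (m - d c) : ℕ) : ℤ) := by
      calc ((8 * k - 6 : ℕ) : ℤ) = 8 * (k : ℤ) - 6 := by
            rw [Nat.cast_sub (by omega)]; push_cast; ring
        _ ≤ _ := hkey
    exact_mod_cast this
  · -- |S| ≤ 1
    push_neg at hs
    refine ⟨by omega, ?_⟩
    rw [← Set.not_nontrivial_iff]
    rintro ⟨c1, hc1, c2, hc2, hne⟩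
    apply hmain
    have hd1 : 1 < d c1 := hc1
    have hd2 : 1 < d c2 := hc2
    have h31 : 3 ≤ d c1 := by obtain ⟨r, hr⟩ := hodd c1; omega
    have h32 : 3 ≤ d c2 := by obtain ⟨r, hr⟩ := hodd c2; omega
    have hpairsum : d c1 + d c2 ≤ m := by
      rw [← hsumd, ← Finset.sum_pair (f := fun c => d c) hne]
      exact Finset.sum_le_sum_of_subset (Finset.subset_univ _)
    have hlb : d c1 * (m - d c1) + d c2 * (m - d c2) ≤ ∑ c, d c * (m - d c) := by
      rw [← Finset.sum_pair (f := fun c => d c * (m - d c)) hne]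
      exact Finset.sum_le_sum_of_subset (Finset.subset_univ _)
    have h1 : 3 * m ≤ d c1 * (m - d c1) + 9 :=
      aux_prod (d c1) (m - d c1) m h31 (by omega) (by omega)
    have h2 : 3 * m ≤ d c2 * (m - d c2) + 9 :=
      aux_prod (d c2) (m - d c2) m h32 (by omega) (by omega)
    have hm1 : 2 * k - 1 ≤ m := by omega
    refine Nat.sub_le_iff_le_add.mpr ?_
    have : 6 * m ≤ d c1 * (m - d c1) + d c2 * (m - d c2) + 18 := by linarith
    have h6m : 8 * k + 12 ≤ 6 * m := by omega
    linarith
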